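/- arXiv:1907.09696 — 2 statements merged into one kernel-verified Lean document; each statement's English description precedes it below -/
import Mathlib

section
/- Let z = |z'| with z' ∼ N(0, σ²). Then E[ (1/2)(z² + 1) erf(z/√2) + (z e^{−z²/2} − 2z)/√(2π) ] = ((σ² + 1) arctan σ)/π − σ/π. -/
open MeasureTheory ProbabilityTheory Real Set Filter
open scoped NNReal ENNReal

lemma sq_mul_atTop {b : ℝ} (hb : 0 < b) : Tendsto (fun x : ℝ => b * x ^ 2) atTop atTop := by
  have h2 : Tendsto (fun x : ℝ => x ^ 2) atTop atTop := tendsto_pow_atTop (by norm_num)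
  exact h2.const_mul_atTop hb

lemma exp_neg_mul_sq_tendsto {b : ℝ} (hb : 0 < b) :
    Tendsto (fun x : ℝ => Real.exp (-b * x ^ 2)) atTop (nhds 0) := by
  apply Real.tendsto_exp_atBot.comp
  have := tendsto_neg_atTop_atBot.comp (sq_mul_atTop hb)
  apply this.congr
  intro x
  simp [Function.comp, neg_mul]

lemma sq_mul_exp_tendsto {b : ℝ} (hb : 0 < b) :
    Tendsto (fun x : ℝ => x ^ 2 * Real.exp (-b * x ^ 2)) atTop (nhds 0) := by
  have h1 : Tendsto (fun y : ℝ => y ^ 1 * Real.exp (-y)) atTop (nhds 0) :=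
    Real.tendsto_pow_mul_exp_neg_atTop_nhds_zero 1
  have h2 := (h1.comp (sq_mul_atTop hb)).const_mul b⁻¹
  simp only [mul_zero] at h2
  apply h2.congr
  intro x
  simp only [Function.comp]
  rw [pow_one, neg_mul]
  field_simp

lemma ixe {b : ℝ} (hb : 0 < b) :
    ∫ x in Ioi (0:ℝ), x * Real.exp (-b * x ^ 2) = (2 * b)⁻¹ := by
  have h : ∀ x ∈ Ici (0:ℝ), HasDerivAt (fun x : ℝ => -(2*b)⁻¹ * Real.exp (-b * x ^ 2))
      (x * Real.exp (-b * x ^ 2)) x := by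
    intro x _
    have h1 : HasDerivAt (fun x : ℝ => -b * x ^ 2) (-b * (2 * x)) x := by
      simpa using ((hasDerivAt_pow 2 x).const_mul (-b))
    have := (h1.exp).const_mul (-(2*b)⁻¹)
    refine this.congr_deriv ?_
    field_simp
  have hint : IntegrableOn (fun x : ℝ => x * Real.exp (-b * x ^ 2)) (Ioi 0) :=
    (integrable_mul_exp_neg_mul_sq hb).integrableOn
  have htend : Tendsto (fun x : ℝ => -(2*b)⁻¹ * Real.exp (-b * x ^ 2)) atTop (nhds 0) := by
    simpa using (exp_neg_mul_sq_tendsto hb).const_mul (-(2*b)⁻¹)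
  have := integral_Ioi_of_hasDerivAt_of_tendsto' h hint htend
  rw [this]
  simp

lemma x3_integrableOn {b : ℝ} (hb : 0 < b) :
    IntegrableOn (fun x : ℝ => x ^ 3 * Real.exp (-b * x ^ 2)) (Ioi 0) := by
  have := integrableOn_rpow_mul_exp_neg_mul_sq hb (s := 3) (by norm_num)
  apply this.congr_fun ?_ measurableSet_Ioi
  intro x hx
  show x ^ (3:ℝ) * Real.exp (-b * x ^ 2) = x ^ (3:ℕ) * Real.exp (-b * x ^ 2)
  rw [show (x:ℝ) ^ (3:ℝ) = x ^ (3:ℕ) from by rw [← Real.rpow_natCast]; norm_num]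

lemma ix3e {b : ℝ} (hb : 0 < b) :
    ∫ x in Ioi (0:ℝ), x ^ 3 * Real.exp (-b * x ^ 2) = (2 * b ^ 2)⁻¹ := by
  have h : ∀ x ∈ Ici (0:ℝ), HasDerivAt
      (fun x : ℝ => (-(2*b)⁻¹ * x ^ 2 - (2*b^2)⁻¹) * Real.exp (-b * x ^ 2))
      (x ^ 3 * Real.exp (-b * x ^ 2)) x := by
    intro x _
    have h1 : HasDerivAt (fun x : ℝ => -b * x ^ 2) (-b * (2 * x)) x := by
      simpa using ((hasDerivAt_pow 2 x).const_mul (-b))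
    have h2 : HasDerivAt (fun x : ℝ => -(2*b)⁻¹ * x ^ 2 - (2*b^2)⁻¹) (-(2*b)⁻¹ * (2*x)) x := by
      have := ((hasDerivAt_pow 2 x).const_mul (-(2*b)⁻¹)).sub_const ((2*b^2)⁻¹)
      refine this.congr_deriv ?_ <;> norm_num <;> ring
    have := h2.mul h1.exp
    refine this.congr_deriv ?_
    field_simp
    ring
  have hint : IntegrableOn (fun x : ℝ => x ^ 3 * Real.exp (-b * x ^ 2)) (Ioi 0) :=
    x3_integrableOn hb
  have htend : Tendsto (fun x : ℝ => (-(2*b)⁻¹ * x ^ 2 - (2*b^2)⁻¹) * Real.exp (-b * x ^ 2))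
      atTop (nhds 0) := by
    have h1 := (sq_mul_exp_tendsto hb).const_mul (-(2*b)⁻¹)
    have h2 := (exp_neg_mul_sq_tendsto hb).const_mul (-(2*b^2)⁻¹)
    have := h1.add h2
    simp only [mul_zero, add_zero] at this
    apply this.congr
    intro x
    ring
  have := integral_Ioi_of_hasDerivAt_of_tendsto' h hint htend
  rw [this]
  simp

noncomputable def erf (t : ℝ) : ℝ := (2 / Real.sqrt π) * ∫ u in (0:ℝ)..t, Real.exp (-u ^ 2)

lemma erf_hasDerivAt (t : ℝ) : HasDerivAt erf (2 / Real.sqrt π * Real.exp (-t ^ 2)) t := by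
  have hc : Continuous fun u : ℝ => Real.exp (-u ^ 2) := by
    exact Real.continuous_exp.comp (continuous_pow 2).neg
  have h1 : HasDerivAt (fun t : ℝ => ∫ u in (0:ℝ)..t, Real.exp (-u ^ 2))
      (Real.exp (-t ^ 2)) t := by
    apply intervalIntegral.integral_hasDerivAt_right
      (hc.intervalIntegrable 0 t) (hc.stronglyMeasurableAtFilter _ _) hc.continuousAt
  exact h1.const_mul (2 / Real.sqrt π)

lemma erf_zero : erf 0 = 0 := by simp [erf]

lemma erf_abs_le (t : ℝ) : |erf t| ≤ 2 / Real.sqrt π * |t| := by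
  rw [erf, abs_mul, abs_of_nonneg (show (0:ℝ) ≤ 2 / Real.sqrt π by positivity)]
  apply mul_le_mul_of_nonneg_left ?_ (show (0:ℝ) ≤ 2 / Real.sqrt π by positivity)
  have := intervalIntegral.norm_integral_le_of_norm_le_const
    (C := 1) (f := fun u : ℝ => Real.exp (-u ^ 2)) (a := 0) (b := t) ?_
  · simpa using this
  · intro u hu
    simp only [Real.norm_eq_abs, abs_of_pos (Real.exp_pos _)]
    exact Real.exp_le_one_iff.mpr (neg_nonpos.mpr (sq_nonneg u))

lemma erf_continuous : Continuous erf := by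
  have : ∀ t : ℝ, ContinuousAt erf t := fun t => (erf_hasDerivAt t).continuousAt
  exact continuous_iff_continuousAt.mpr this

lemma abs_cube_integrableOn : IntegrableOn (fun x : ℝ => |x| ^ 3 * Real.exp (-x ^ 2)) (Ioi 0) := by
  apply ((x3_integrableOn one_pos).congr_fun ?_ measurableSet_Ioi)
  intro x hx
  simp only [abs_of_pos (mem_Ioi.mp hx)]
  norm_num

lemma abs_mul_exp_integrableOn : IntegrableOn (fun x : ℝ => |x| * Real.exp (-x ^ 2)) (Ioi 0) := by
  apply (((integrable_mul_exp_neg_mul_sq one_pos).integrableOn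
    (s := Ioi 0)).congr_fun ?_ measurableSet_Ioi)
  intro x hx
  simp only [abs_of_pos (mem_Ioi.mp hx)]
  norm_num

lemma F_cont (c : ℝ) : Continuous fun x : ℝ => erf (c * x) * Real.exp (-x ^ 2) :=
  (erf_continuous.comp (continuous_const.mul continuous_id)).mul
    (Real.continuous_exp.comp (continuous_pow 2).neg)

lemma gfun_hasDeriv (c : ℝ) :
    HasDerivAt (fun c : ℝ => ∫ x in Ioi (0:ℝ), erf (c * x) * Real.exp (-x ^ 2))
      (1 / (Real.sqrt π * (1 + c ^ 2))) c := by
  have key := hasDerivAt_integral_of_dominated_loc_of_deriv_le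
    (μ := volume.restrict (Ioi (0:ℝ))) (x₀ := c) (s := Metric.ball c 1) (Metric.ball_mem_nhds c one_pos)
    (F := fun c x => erf (c * x) * Real.exp (-x ^ 2))
    (F' := fun c x => 2 / Real.sqrt π * Real.exp (-(c * x) ^ 2) * x * Real.exp (-x ^ 2))
    (bound := fun x => 2 / Real.sqrt π * (|x| * Real.exp (-x ^ 2)))
    ?_ ?_ ?_ ?_ ?_ ?_
  · -- conclude
    have h2 := key.2
    have heq : ∫ x in Ioi (0:ℝ), 2 / Real.sqrt π * Real.exp (-(c * x) ^ 2) * x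
        * Real.exp (-x ^ 2) = 1 / (Real.sqrt π * (1 + c ^ 2)) := by
      have : ∀ x : ℝ, 2 / Real.sqrt π * Real.exp (-(c * x) ^ 2) * x * Real.exp (-x ^ 2)
          = 2 / Real.sqrt π * (x * Real.exp (-(1 + c ^ 2) * x ^ 2)) := by
        intro x
        rw [show (-(1 + c ^ 2) * x ^ 2 : ℝ) = -(c * x) ^ 2 + -x ^ 2 by ring, Real.exp_add]
        ring
      simp_rw [this]
      rw [integral_const_mul, ixe (by positivity : (0:ℝ) < 1 + c ^ 2)]
      rw [div_mul_eq_mul_div, mul_inv]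
      have hπ : Real.sqrt π ≠ 0 := ne_of_gt (Real.sqrt_pos.mpr Real.pi_pos)
      field_simp
    rwa [heq] at h2
  · exact Eventually.of_forall fun c' => (F_cont c').aestronglyMeasurable
  · -- integrable F c
    apply Integrable.mono' ((abs_mul_exp_integrableOn.const_mul (2 / Real.sqrt π * |c|)))
    · exact (F_cont c).aestronglyMeasurable
    · refine Eventually.of_forall fun x => ?_
      rw [Real.norm_eq_abs, abs_mul, abs_of_pos (Real.exp_pos _)]
      calc |erf (c * x)| * Real.exp (-x ^ 2)
          ≤ 2 / Real.sqrt π * |c * x| * Real.exp (-x ^ 2) := by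
            apply mul_le_mul_of_nonneg_right (erf_abs_le _) (Real.exp_pos _).le
        _ = 2 / Real.sqrt π * |c| * (|x| * Real.exp (-x ^ 2)) := by
            rw [abs_mul]; ring
  · apply Continuous.aestronglyMeasurable
    fun_prop
  · refine Eventually.of_forall fun x => fun c' _ => ?_
    rw [Real.norm_eq_abs]
    have h1 : Real.exp (-(c' * x) ^ 2) ≤ 1 :=
      Real.exp_le_one_iff.mpr (neg_nonpos.mpr (sq_nonneg _))
    calc |2 / Real.sqrt π * Real.exp (-(c' * x) ^ 2) * x * Real.exp (-x ^ 2)|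
        = 2 / Real.sqrt π * Real.exp (-(c' * x) ^ 2) * |x| * Real.exp (-x ^ 2) := by
          rw [abs_mul, abs_mul, abs_mul, abs_of_pos (Real.exp_pos _),
            abs_of_pos (Real.exp_pos _), abs_of_nonneg (show (0:ℝ) ≤ 2 / Real.sqrt π by positivity)]
      _ ≤ 2 / Real.sqrt π * 1 * |x| * Real.exp (-x ^ 2) := by
          apply mul_le_mul_of_nonneg_right ?_ (Real.exp_pos _).le
          apply mul_le_mul_of_nonneg_right ?_ (abs_nonneg _)
          exact mul_le_mul_of_nonneg_left h1 (by positivity)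
      _ = 2 / Real.sqrt π * (|x| * Real.exp (-x ^ 2)) := by ring
  · exact abs_mul_exp_integrableOn.const_mul _
  · refine Eventually.of_forall fun x => fun c' _ => ?_
    have h1 : HasDerivAt (fun c : ℝ => erf (c * x))
        (2 / Real.sqrt π * Real.exp (-(c' * x) ^ 2) * x) c' :=
      by have := (erf_hasDerivAt (c' * x)).comp c' (hasDerivAt_mul_const x); exact this
    exact h1.mul_const _

lemma gfun_eq (c : ℝ) :
    ∫ x in Ioi (0:ℝ), erf (c * x) * Real.exp (-x ^ 2) = Real.arctan c / Real.sqrt π := by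
  set D : ℝ → ℝ := fun c => (∫ x in Ioi (0:ℝ), erf (c * x) * Real.exp (-x ^ 2))
    - Real.arctan c / Real.sqrt π with hD
  have hDer : ∀ c : ℝ, HasDerivAt D 0 c := by
    intro c
    have h1 := gfun_hasDeriv c
    have h2 : HasDerivAt (fun c : ℝ => Real.arctan c / Real.sqrt π)
        (1 / (1 + c ^ 2) / Real.sqrt π) c := (Real.hasDerivAt_arctan c).div_const _
    have := h1.sub h2
    refine this.congr_deriv ?_
    have hπ : Real.sqrt π ≠ 0 := ne_of_gt (Real.sqrt_pos.mpr Real.pi_pos)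
    have h3 : (0:ℝ) < 1 + c ^ 2 := by positivity
    field_simp
    ring
  have hconst : D c = D 0 := by
    apply is_const_of_deriv_eq_zero
    · exact fun x => (hDer x).differentiableAt
    · exact fun x => (hDer x).deriv
  have hD0 : D 0 = 0 := by
    simp [hD, erf_zero]
  have := hconst.trans hD0
  rw [hD] at this
  linarith

lemma H_cont (c : ℝ) : Continuous fun x : ℝ => x ^ 2 * erf (c * x) * Real.exp (-x ^ 2) := by
  have := erf_continuous
  fun_prop

lemma hfun_hasDeriv (c : ℝ) :
    HasDerivAt (fun c : ℝ => ∫ x in Ioi (0:ℝ), x ^ 2 * erf (c * x) * Real.exp (-x ^ 2))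
      (1 / (Real.sqrt π * (1 + c ^ 2) ^ 2)) c := by
  have key := hasDerivAt_integral_of_dominated_loc_of_deriv_le
    (μ := volume.restrict (Ioi (0:ℝ))) (x₀ := c) (s := Metric.ball c 1) (Metric.ball_mem_nhds c one_pos)
    (F := fun c x => x ^ 2 * erf (c * x) * Real.exp (-x ^ 2))
    (F' := fun c x => x ^ 2 * (2 / Real.sqrt π * Real.exp (-(c * x) ^ 2) * x)
      * Real.exp (-x ^ 2))
    (bound := fun x => 2 / Real.sqrt π * (|x| ^ 3 * Real.exp (-x ^ 2)))
    ?_ ?_ ?_ ?_ ?_ ?_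
  · have h2 := key.2
    have heq : ∫ x in Ioi (0:ℝ), x ^ 2 * (2 / Real.sqrt π * Real.exp (-(c * x) ^ 2) * x)
        * Real.exp (-x ^ 2) = 1 / (Real.sqrt π * (1 + c ^ 2) ^ 2) := by
      have : ∀ x : ℝ, x ^ 2 * (2 / Real.sqrt π * Real.exp (-(c * x) ^ 2) * x)
          * Real.exp (-x ^ 2) = 2 / Real.sqrt π * (x ^ 3 * Real.exp (-(1 + c ^ 2) * x ^ 2)) := by
        intro x
        rw [show (-(1 + c ^ 2) * x ^ 2 : ℝ) = -(c * x) ^ 2 + -x ^ 2 by ring, Real.exp_add]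
        ring
      simp_rw [this]
      rw [integral_const_mul, ix3e (by positivity : (0:ℝ) < 1 + c ^ 2)]
      have hπ : Real.sqrt π ≠ 0 := ne_of_gt (Real.sqrt_pos.mpr Real.pi_pos)
      have h3 : ((1:ℝ) + c ^ 2) ≠ 0 := by positivity
      field_simp
    rwa [heq] at h2
  · exact Eventually.of_forall fun c' => (H_cont c').aestronglyMeasurable
  · apply Integrable.mono' ((abs_cube_integrableOn.const_mul (2 / Real.sqrt π * |c|)))
    · exact (H_cont c).aestronglyMeasurable
    · refine Eventually.of_forall fun x => ?_
      rw [Real.norm_eq_abs, abs_mul, abs_mul, abs_of_pos (Real.exp_pos _), abs_pow, sq_abs]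
      calc x ^ 2 * |erf (c * x)| * Real.exp (-x ^ 2)
          ≤ x ^ 2 * (2 / Real.sqrt π * |c * x|) * Real.exp (-x ^ 2) := by
            apply mul_le_mul_of_nonneg_right ?_ (Real.exp_pos _).le
            exact mul_le_mul_of_nonneg_left (erf_abs_le _) (sq_nonneg x)
        _ = 2 / Real.sqrt π * |c| * (|x| ^ 3 * Real.exp (-x ^ 2)) := by
            rw [abs_mul]
            rw [show x ^ 2 = |x| ^ 2 from (sq_abs x).symm]
            ring
  · apply Continuous.aestronglyMeasurable
    fun_prop
  · refine Eventually.of_forall fun x => fun c' _ => ?_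
    rw [Real.norm_eq_abs]
    have h1 : Real.exp (-(c' * x) ^ 2) ≤ 1 :=
      Real.exp_le_one_iff.mpr (neg_nonpos.mpr (sq_nonneg _))
    calc |x ^ 2 * (2 / Real.sqrt π * Real.exp (-(c' * x) ^ 2) * x) * Real.exp (-x ^ 2)|
        = 2 / Real.sqrt π * Real.exp (-(c' * x) ^ 2) * |x| ^ 3 * Real.exp (-x ^ 2) := by
          rw [abs_mul, abs_mul, abs_mul, abs_mul, abs_of_pos (Real.exp_pos _),
            abs_of_pos (Real.exp_pos _), abs_pow, sq_abs,
            abs_of_nonneg (show (0:ℝ) ≤ 2 / Real.sqrt π by positivity)]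
          rw [show x ^ 2 = |x| ^ 2 from (sq_abs x).symm]
          ring
      _ ≤ 2 / Real.sqrt π * 1 * |x| ^ 3 * Real.exp (-x ^ 2) := by
          apply mul_le_mul_of_nonneg_right ?_ (Real.exp_pos _).le
          apply mul_le_mul_of_nonneg_right ?_ (by positivity)
          exact mul_le_mul_of_nonneg_left h1 (by positivity)
      _ = 2 / Real.sqrt π * (|x| ^ 3 * Real.exp (-x ^ 2)) := by ring
  · exact abs_cube_integrableOn.const_mul _
  · refine Eventually.of_forall fun x => fun c' _ => ?_
    have h1 : HasDerivAt (fun c : ℝ => erf (c * x))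
        (2 / Real.sqrt π * Real.exp (-(c' * x) ^ 2) * x) c' :=
      by have := (erf_hasDerivAt (c' * x)).comp c' (hasDerivAt_mul_const x); exact this
    exact (h1.const_mul (x ^ 2)).mul_const _

lemma hfun_eq (c : ℝ) :
    ∫ x in Ioi (0:ℝ), x ^ 2 * erf (c * x) * Real.exp (-x ^ 2)
      = (Real.arctan c + c / (1 + c ^ 2)) / (2 * Real.sqrt π) := by
  set D : ℝ → ℝ := fun c => (∫ x in Ioi (0:ℝ), x ^ 2 * erf (c * x) * Real.exp (-x ^ 2))
    - (Real.arctan c + c / (1 + c ^ 2)) / (2 * Real.sqrt π) with hD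
  have hDer : ∀ c : ℝ, HasDerivAt D 0 c := by
    intro c
    have h1 := hfun_hasDeriv c
    have h3 : ((1:ℝ) + c ^ 2) ≠ 0 := by positivity
    have h2 : HasDerivAt (fun c : ℝ => (Real.arctan c + c / (1 + c ^ 2)) / (2 * Real.sqrt π))
        ((1 / (1 + c ^ 2) + (1 * (1 + c ^ 2) - c * (2 * c)) / (1 + c ^ 2) ^ 2)
          / (2 * Real.sqrt π)) c := by
      apply HasDerivAt.div_const
      apply (Real.hasDerivAt_arctan c).add
      have hnum : HasDerivAt (fun c : ℝ => c) 1 c := hasDerivAt_id c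
      have hden : HasDerivAt (fun c : ℝ => 1 + c ^ 2) (2 * c) c := by
        simpa using (hasDerivAt_pow 2 c).const_add 1
      exact hnum.div hden h3
    have := h1.sub h2
    refine this.congr_deriv ?_
    have hπ : Real.sqrt π ≠ 0 := ne_of_gt (Real.sqrt_pos.mpr Real.pi_pos)
    field_simp
    ring
  have hconst : D c = D 0 := by
    apply is_const_of_deriv_eq_zero
    · exact fun x => (hDer x).differentiableAt
    · exact fun x => (hDer x).deriv
  have hD0 : D 0 = 0 := by
    simp [hD, erf_zero]
  have := hconst.trans hD0
  rw [hD] at this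
  linarith

lemma integral_gaussianReal_pdf {v : ℝ≥0} (hv : v ≠ 0) (g : ℝ → ℝ) :
    ∫ x, g x ∂(gaussianReal 0 v) = ∫ x, gaussianPDFReal 0 v x * g x := by
  rw [gaussianReal_of_var_ne_zero 0 hv]
  have hmeas : Measurable fun x => (gaussianPDFReal 0 v x).toNNReal :=
    (measurable_gaussianPDFReal 0 v).real_toNNReal
  have : volume.withDensity (gaussianPDF 0 v)
      = volume.withDensity (fun x => ((gaussianPDFReal 0 v x).toNNReal : ℝ≥0∞)) := rfl
  rw [this, integral_withDensity_eq_integral_smul hmeas g]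
  congr 1
  ext x
  rw [NNReal.smul_def, smul_eq_mul, Real.coe_toNNReal _ (gaussianPDFReal_nonneg 0 v x)]

lemma int_g (c : ℝ) : IntegrableOn (fun x : ℝ => erf (c * x) * Real.exp (-x ^ 2)) (Ioi 0) := by
  apply Integrable.mono' ((abs_mul_exp_integrableOn.const_mul (2 / Real.sqrt π * |c|)))
  · exact (F_cont c).aestronglyMeasurable
  · refine Eventually.of_forall fun x => ?_
    rw [Real.norm_eq_abs, abs_mul, abs_of_pos (Real.exp_pos _)]
    calc |erf (c * x)| * Real.exp (-x ^ 2)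
        ≤ 2 / Real.sqrt π * |c * x| * Real.exp (-x ^ 2) := by
          apply mul_le_mul_of_nonneg_right (erf_abs_le _) (Real.exp_pos _).le
      _ = 2 / Real.sqrt π * |c| * (|x| * Real.exp (-x ^ 2)) := by
          rw [abs_mul]; ring

lemma int_h (c : ℝ) :
    IntegrableOn (fun x : ℝ => x ^ 2 * erf (c * x) * Real.exp (-x ^ 2)) (Ioi 0) := by
  apply Integrable.mono' ((abs_cube_integrableOn.const_mul (2 / Real.sqrt π * |c|)))
  · exact (H_cont c).aestronglyMeasurable
  · refine Eventually.of_forall fun x => ?_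
    rw [Real.norm_eq_abs, abs_mul, abs_mul, abs_of_pos (Real.exp_pos _), abs_pow, sq_abs]
    calc x ^ 2 * |erf (c * x)| * Real.exp (-x ^ 2)
        ≤ x ^ 2 * (2 / Real.sqrt π * |c * x|) * Real.exp (-x ^ 2) := by
          apply mul_le_mul_of_nonneg_right ?_ (Real.exp_pos _).le
          exact mul_le_mul_of_nonneg_left (erf_abs_le _) (sq_nonneg x)
      _ = 2 / Real.sqrt π * |c| * (|x| ^ 3 * Real.exp (-x ^ 2)) := by
          rw [abs_mul]
          rw [show x ^ 2 = |x| ^ 2 from (sq_abs x).symm]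
          ring

theorem half_normal_combined_identity (σ : ℝ) (hσ : 0 < σ) :
    ∫ x, ((1 / 2) * (|x| ^ 2 + 1) * erf (|x| / Real.sqrt 2)
          + (|x| * Real.exp (-|x| ^ 2 / 2) - 2 * |x|) / Real.sqrt (2 * π))
        ∂(gaussianReal 0 ⟨σ ^ 2, sq_nonneg σ⟩)
      = (σ ^ 2 + 1) * Real.arctan σ / π - σ / π := by
  have hπ : (0:ℝ) < Real.sqrt π := Real.sqrt_pos.mpr Real.pi_pos
  have h2 : (0:ℝ) < Real.sqrt 2 := Real.sqrt_pos.mpr (by norm_num)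
  have h2π : (0:ℝ) < Real.sqrt (2*π) := Real.sqrt_pos.mpr (by positivity)
  set v : ℝ≥0 := ⟨σ ^ 2, sq_nonneg σ⟩ with hv
  have hv0 : v ≠ 0 := by
    intro h
    have : (v : ℝ) = 0 := by rw [h]; simp
    rw [hv] at this
    change σ ^ 2 = 0 at this
    nlinarith
  set f : ℝ → ℝ := fun t => (1 / 2) * (t ^ 2 + 1) * erf (t / Real.sqrt 2)
      + (t * Real.exp (-t ^ 2 / 2) - 2 * t) / Real.sqrt (2 * π) with hf
  set G : ℝ → ℝ := fun t => (Real.sqrt (2 * π) * σ)⁻¹ * (Real.exp (-t ^ 2 / (2 * σ ^ 2)) * f t)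
    with hG
  have step1 : ∫ x, f |x| ∂(gaussianReal 0 v) = ∫ x : ℝ, G |x| := by
    rw [integral_gaussianReal_pdf hv0]
    congr 1
    ext x
    rw [hG]
    simp only [gaussianPDFReal, hv, NNReal.coe_mk, sub_zero]
    have hsq : Real.sqrt (2 * π * σ ^ 2) = Real.sqrt (2 * π) * σ := by
      rw [Real.sqrt_mul (by positivity), Real.sqrt_sq hσ.le]
    change (Real.sqrt (2 * π * σ ^ 2))⁻¹ * Real.exp (-x ^ 2 / (2 * σ ^ 2)) * f |x| = _
    rw [hsq, sq_abs, mul_assoc]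
  have step2 : ∫ x : ℝ, G |x| = 2 * ∫ t in Ioi (0:ℝ), G t := integral_comp_abs
  set k : ℝ := Real.sqrt 2 * σ with hk
  have hkpos : 0 < k := by positivity
  have hσ0 : σ ≠ 0 := hσ.ne'
  set E : ℝ → ℝ := fun t => Real.exp (-t ^ 2 / (2 * σ ^ 2)) * f t with hE
  have step3 : ∫ t in Ioi (0:ℝ), G t = (Real.sqrt (2 * π) * σ)⁻¹ * ∫ t in Ioi (0:ℝ), E t := by
    rw [hG]
    exact integral_const_mul _ _
  have step4 : ∫ t in Ioi (0:ℝ), E t = k * ∫ y in Ioi (0:ℝ), E (k * y) := by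
    have := integral_comp_mul_left_Ioi E 0 hkpos
    rw [mul_zero] at this
    rw [this, smul_eq_mul, ← mul_assoc, mul_inv_cancel₀ hkpos.ne', one_mul]
  have hpt : ∀ y : ℝ, E (k * y)
      = σ ^ 2 * (y ^ 2 * erf (σ * y) * Real.exp (-y ^ 2))
        + (1 / 2) * (erf (σ * y) * Real.exp (-y ^ 2))
        + (k / Real.sqrt (2 * π)) * (y * Real.exp (-(1 + σ ^ 2) * y ^ 2))
        + (-(2 * k) / Real.sqrt (2 * π)) * (y * Real.exp (-(1:ℝ) * y ^ 2)) := by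
    intro y
    simp only [hE, hf, hk]
    have e1 : (Real.sqrt 2 * σ * y) ^ 2 = 2 * σ ^ 2 * y ^ 2 := by
      rw [mul_pow, mul_pow, Real.sq_sqrt (by norm_num : (0:ℝ) ≤ 2)]
    have e2 : Real.sqrt 2 * σ * y / Real.sqrt 2 = σ * y := by
      field_simp
    rw [e1, e2]
    have a1 : -(2 * σ ^ 2 * y ^ 2) / (2 * σ ^ 2) = -y ^ 2 := by
      field_simp
    have a2 : -(2 * σ ^ 2 * y ^ 2) / 2 = -(σ ^ 2 * y ^ 2) := by ring
    have a3 : Real.exp (-(1 + σ ^ 2) * y ^ 2)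
        = Real.exp (-(σ ^ 2 * y ^ 2)) * Real.exp (-y ^ 2) := by
      rw [← Real.exp_add]; ring_nf
    have a4 : (-(1:ℝ) * y ^ 2) = -y ^ 2 := by ring
    rw [a1, a2, a3, a4]
    ring
  have hI1 : IntegrableOn (fun y : ℝ =>
      σ ^ 2 * (y ^ 2 * erf (σ * y) * Real.exp (-y ^ 2))) (Ioi 0) :=
    (int_h σ).const_mul _
  have hI2 : IntegrableOn (fun y : ℝ =>
      (1 / 2 : ℝ) * (erf (σ * y) * Real.exp (-y ^ 2))) (Ioi 0) :=
    (int_g σ).const_mul _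
  have hI3 : IntegrableOn (fun y : ℝ =>
      (k / Real.sqrt (2 * π)) * (y * Real.exp (-(1 + σ ^ 2) * y ^ 2))) (Ioi 0) :=
    ((integrable_mul_exp_neg_mul_sq (by positivity : (0:ℝ) < 1 + σ ^ 2)).integrableOn).const_mul _
  have hI4 : IntegrableOn (fun y : ℝ =>
      (-(2 * k) / Real.sqrt (2 * π)) * (y * Real.exp (-(1:ℝ) * y ^ 2))) (Ioi 0) :=
    ((integrable_mul_exp_neg_mul_sq (by norm_num : (0:ℝ) < 1)).integrableOn).const_mul _
  have step5 : ∫ y in Ioi (0:ℝ), E (k * y)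
      = σ ^ 2 * (∫ y in Ioi (0:ℝ), y ^ 2 * erf (σ * y) * Real.exp (-y ^ 2))
        + (1 / 2) * (∫ y in Ioi (0:ℝ), erf (σ * y) * Real.exp (-y ^ 2))
        + (k / Real.sqrt (2 * π)) * (∫ y in Ioi (0:ℝ), y * Real.exp (-(1 + σ ^ 2) * y ^ 2))
        + (-(2 * k) / Real.sqrt (2 * π)) * (∫ y in Ioi (0:ℝ), y * Real.exp (-(1:ℝ) * y ^ 2)) := by
    have h12 : IntegrableOn (fun y : ℝ =>
        σ ^ 2 * (y ^ 2 * erf (σ * y) * Real.exp (-y ^ 2))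
          + (1 / 2) * (erf (σ * y) * Real.exp (-y ^ 2))) (Ioi 0) := hI1.add hI2
    have h123 : IntegrableOn (fun y : ℝ =>
        σ ^ 2 * (y ^ 2 * erf (σ * y) * Real.exp (-y ^ 2))
          + (1 / 2) * (erf (σ * y) * Real.exp (-y ^ 2))
          + (k / Real.sqrt (2 * π)) * (y * Real.exp (-(1 + σ ^ 2) * y ^ 2))) (Ioi 0) :=
      h12.add hI3
    rw [show (fun y : ℝ => E (k * y)) = fun y : ℝ =>
      σ ^ 2 * (y ^ 2 * erf (σ * y) * Real.exp (-y ^ 2))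
        + (1 / 2) * (erf (σ * y) * Real.exp (-y ^ 2))
        + (k / Real.sqrt (2 * π)) * (y * Real.exp (-(1 + σ ^ 2) * y ^ 2))
        + (-(2 * k) / Real.sqrt (2 * π)) * (y * Real.exp (-(1:ℝ) * y ^ 2)) from
      funext fun y => hpt y]
    rw [integral_add h123 hI4, integral_add h12 hI3,
      integral_add hI1 hI2, integral_const_mul, integral_const_mul, integral_const_mul,
      integral_const_mul]
  rw [step1, step2, step3, step4, step5, hfun_eq σ, gfun_eq σ,
    ixe (by positivity : (0:ℝ) < 1 + σ ^ 2), ixe (by norm_num : (0:ℝ) < 1)]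
  rw [show Real.sqrt (2 * π) = Real.sqrt 2 * Real.sqrt π from
    Real.sqrt_mul (by norm_num) π, hk]
  have hπ2 : π = Real.sqrt π ^ 2 := (Real.sq_sqrt Real.pi_pos.le).symm
  have h1σ : ((1:ℝ) + σ ^ 2) ≠ 0 := by positivity
  conv_rhs => rw [hπ2]
  have h22 : Real.sqrt 2 * Real.sqrt 2 = 2 := Real.mul_self_sqrt (by norm_num)
  field_simp
  ring_nf
end

section
/- For ω uniform on [−π, π] and fixed θ_max = arctan(r) ∈ (0, π/2) with r > 0: if |ω| ∈ (π/2 + θ_max, π] then cos(ω − θ) ≤ 0 for all θ ∈ [−θ_max, θ_max]; if |ω| < π/2 − θ_max then cos(ω − θ) > 0 for all θ ∈ [−θ_max, θ_max]. Consequently, for (w,b) uniform on S¹ and x ∈ [−r, r], the neuron φ(wx + b) is identically zero on [−r, r] exactly when the angle ω of (w,b) satisfies |ω| ≥ π/2 + θ_max, an event of probability (π/2 − θ_max)/π = arctan(1/r)/π. -/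
open MeasureTheory Metric Real
open scoped ENNReal NNReal

noncomputable def gam (t : ℝ) : EuclideanSpace ℝ (Fin 2) := WithLp.toLp 2 ![Real.sin t, Real.cos t]

@[simp] lemma gam_zero (t : ℝ) : gam t 0 = Real.sin t := rfl
@[simp] lemma gam_one (t : ℝ) : gam t 1 = Real.cos t := rfl

lemma dist_gam (s t : ℝ) : dist (gam s) (gam t) = 2 * |Real.sin ((s - t) / 2)| := by
  rw [EuclideanSpace.dist_eq]
  simp only [Fin.sum_univ_two, gam_zero, gam_one, Real.dist_eq]
  have h1 : |Real.sin s - Real.sin t| ^ 2 + |Real.cos s - Real.cos t| ^ 2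
      = (2 * |Real.sin ((s - t) / 2)|) ^ 2 := by
    have h2 : Real.cos (s - t) = 1 - 2 * Real.sin ((s - t) / 2) ^ 2 := by
      have h := Real.cos_two_mul ((s - t) / 2)
      have h' := Real.sin_sq_add_cos_sq ((s - t) / 2)
      rw [show 2 * ((s - t) / 2) = s - t by ring] at h
      nlinarith
    have h3 := Real.cos_sub s t
    have h4 := Real.sin_sq_add_cos_sq s
    have h5 := Real.sin_sq_add_cos_sq t
    have e1 : |Real.sin s - Real.sin t| ^ 2 = (Real.sin s - Real.sin t) ^ 2 := sq_abs _
    have e2 : |Real.cos s - Real.cos t| ^ 2 = (Real.cos s - Real.cos t) ^ 2 := sq_abs _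
    have e3 : |Real.sin ((s-t)/2)| ^ 2 = Real.sin ((s-t)/2) ^ 2 := sq_abs _
    nlinarith
  rw [h1, Real.sqrt_sq (by positivity)]

lemma lipschitz_gam : LipschitzWith 1 gam := by
  refine LipschitzWith.of_dist_le_mul fun s t => ?_
  rw [dist_gam, Real.dist_eq, NNReal.coe_one, one_mul]
  calc 2 * |Real.sin ((s - t) / 2)| ≤ 2 * |(s - t) / 2| := by
        have := Real.abs_sin_le_abs (x := (s - t) / 2)
        linarith [this]
    _ = |s - t| := by rw [abs_div]; simp; ring

lemma hm_Icc (a b : ℝ) (hab : a ≤ b) : μH[(1:ℝ)] (Set.Icc a b) = ENNReal.ofReal (b - a) := by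
  rw [MeasureTheory.hausdorffMeasure_real, Real.volume_Icc]

lemma arc_upper (a b : ℝ) (hab : a ≤ b) :
    μH[(1:ℝ)] (gam '' Set.Icc a b) ≤ ENNReal.ofReal (b - a) := by
  have h := lipschitz_gam.hausdorffMeasure_image_le (zero_le_one) (Set.Icc a b)
  simpa [hm_Icc a b hab] using h

lemma sin_half_lb {δ v : ℝ} (hδ0 : 0 < δ) (hδ1 : δ ≤ 1) (hv : |v| ≤ δ) :
    (1 - δ ^ 2 / 16) * |v| ≤ 2 * |Real.sin (v / 2)| := by
  wlog h : 0 ≤ v generalizing v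
  · have h2 := this (v := -v) (by simpa using hv) (by linarith)
    rw [show -v/2 = -(v/2) by ring, Real.sin_neg, abs_neg, abs_neg] at h2
    exact h2
  rw [abs_of_nonneg h] at hv ⊢
  rw [abs_of_nonneg (Real.sin_nonneg_of_nonneg_of_le_pi (by linarith)
    (by nlinarith [Real.pi_gt_three]))]
  rcases eq_or_lt_of_le h with h0 | h0
  · simp [← h0]
  · have hsin := Real.sin_gt_sub_cube (by linarith : 0 < v/2)
    have hv2 : v * v ≤ δ * δ := mul_self_le_mul_self h hv
    nlinarith [hsin, hv2, h0]

lemma arc_lower_small {δ : ℝ} (hδ0 : 0 < δ) (hδ1 : δ ≤ 1) (a b : ℝ) (hab : a ≤ b)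
    (hlen : b - a ≤ δ) :
    ENNReal.ofReal ((b - a) * (1 - δ ^ 2 / 16)) ≤ μH[(1:ℝ)] (gam '' Set.Icc a b) := by
  set c : ℝ := 1 - δ ^ 2 / 16 with hc
  have hc0 : 0 < c := by rw [hc]; nlinarith
  set K : ℝ≥0 := Real.toNNReal c⁻¹ with hK
  set f : ↥(Set.Icc a b) → EuclideanSpace ℝ (Fin 2) := fun x => gam x.1 with hf
  have key : ∀ s t : ℝ, s ∈ Set.Icc a b → t ∈ Set.Icc a b →
      c * |s - t| ≤ 2 * |Real.sin ((s - t) / 2)| := by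
    intro s t hs ht
    have : |s - t| ≤ δ := by
      rw [abs_le]; constructor <;>
        [linarith [hs.1, ht.2]; linarith [hs.2, ht.1]]
    exact sin_half_lb hδ0 hδ1 this
  have hanti : AntilipschitzWith K f := by
    apply AntilipschitzWith.of_le_mul_dist
    intro x y
    have h2 := key x.1 y.1 x.2 y.2
    have hKc : (K : ℝ) = c⁻¹ := Real.coe_toNNReal _ (by positivity)
    have hd : dist (f x) (f y) = 2 * |Real.sin ((x.1 - y.1) / 2)| := dist_gam _ _
    rw [Subtype.dist_eq, Real.dist_eq, hd, hKc, inv_mul_eq_div, le_div_iff₀ hc0]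
    nlinarith [h2, abs_nonneg (x.1 - y.1)]
  have h1 : μH[(1:ℝ)] (Set.univ : Set ↥(Set.Icc a b)) ≤
      (K : ℝ≥0∞) ^ (1:ℝ) * μH[(1:ℝ)] (f '' Set.univ) :=
    hanti.le_hausdorffMeasure_image zero_le_one _
  have h2 : μH[(1:ℝ)] (Set.univ : Set ↥(Set.Icc a b)) = ENNReal.ofReal (b - a) := by
    have hiso : Isometry (Subtype.val : ↥(Set.Icc a b) → ℝ) := isometry_subtype_coe
    have := hiso.hausdorffMeasure_image (Or.inl zero_le_one) Set.univ
    rw [Set.image_univ, Subtype.range_coe] at this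
    rw [← this, hm_Icc a b hab]
  have h3 : f '' Set.univ = gam '' Set.Icc a b := by
    rw [Set.image_univ, hf]
    ext v; simp [Set.range, Set.mem_image]
  rw [h2, h3] at h1
  rw [ENNReal.rpow_one] at h1
  have hKinv : (K : ℝ≥0∞)⁻¹ = ENNReal.ofReal c := by
    rw [show ((K : ℝ≥0∞)) = ENNReal.ofReal c⁻¹ from rfl,
      ENNReal.ofReal_inv_of_pos hc0, inv_inv]
  have hKne : (K : ℝ≥0∞) ≠ 0 := by
    simp [hK, Real.toNNReal_eq_zero, not_le, inv_pos, hc0]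
  have h4 : (K : ℝ≥0∞)⁻¹ * ENNReal.ofReal (b - a) ≤ μH[(1:ℝ)] (gam '' Set.Icc a b) :=
    (ENNReal.inv_mul_le_iff hKne ENNReal.coe_ne_top).mpr h1
  calc ENNReal.ofReal ((b - a) * c) = (K : ℝ≥0∞)⁻¹ * ENNReal.ofReal (b - a) := by
        rw [hKinv, ← ENNReal.ofReal_mul hc0.le, mul_comm]
    _ ≤ _ := h4

lemma gam_continuous : Continuous gam := lipschitz_gam.continuous

lemma gam_eq (s t : ℝ) (h : gam s = gam t) : ∃ k : ℤ, (k : ℝ) * (2 * π) = s - t := by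
  have hs : Real.sin s = Real.sin t := congrFun (congrArg (fun v => WithLp.ofLp v) h) 0
  have hc : Real.cos s = Real.cos t := congrFun (congrArg (fun v => WithLp.ofLp v) h) 1
  have : Real.cos (s - t) = 1 := by
    rw [Real.cos_sub, hs, hc]
    exact Real.cos_sq_add_sin_sq t ▸ by nlinarith [Real.sin_sq_add_cos_sq t]
  exact (Real.cos_eq_one_iff _).1 this

lemma arc_inter (a m b : ℝ) (h1 : a ≤ m) (h2 : m ≤ b) (h : b - a ≤ 2 * π) :
    gam '' Set.Icc a m ∩ gam '' Set.Icc m b ⊆ {gam m, gam b} := by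
  rintro v ⟨⟨s, hs, rfl⟩, ⟨t, ht, hv⟩⟩
  obtain ⟨k, hk⟩ := gam_eq t s hv
  have h2π : 0 < 2 * π := by positivity
  have hts : 0 ≤ t - s := by linarith [hs.2, ht.1]
  have htsle : t - s ≤ 2 * π := by linarith [hs.1, ht.2]
  have hk0 : (0 : ℤ) ≤ k := by
    by_contra hneg
    push_neg at hneg
    have hk' : k ≤ -1 := by omega
    have : (k : ℝ) ≤ -1 := by exact_mod_cast hk'
    nlinarith
  have hk1 : k ≤ 1 := by
    by_contra hgt
    push_neg at hgt
    have : (2 : ℝ) ≤ (k : ℝ) := by exact_mod_cast hgt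
    nlinarith
  interval_cases k
  · have : s = t := by simp at hk; linarith
    have : s = m := le_antisymm hs.2 (this ▸ ht.1)
    left; rw [this]
  · have htb : t = b := by
      simp at hk
      have : t - s = 2 * π := by linarith
      have : t = b := le_antisymm ht.2 (by nlinarith [hs.1])
      exact this
    right; rw [← hv, htb]; rfl

lemma arc_split (a m b : ℝ) (h1 : a ≤ m) (h2 : m ≤ b) (h : b - a ≤ 2 * π) :
    μH[(1:ℝ)] (gam '' Set.Icc a b)
      = μH[(1:ℝ)] (gam '' Set.Icc a m) + μH[(1:ℝ)] (gam '' Set.Icc m b) := by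
  haveI : NullSingletonClass (μH[(1:ℝ)] : Measure (EuclideanSpace ℝ (Fin 2))) :=
    MeasureTheory.Measure.noAtoms_hausdorff _ one_pos
  have hB : MeasurableSet (gam '' Set.Icc m b) :=
    (isCompact_Icc.image gam_continuous).measurableSet
  have hnull : μH[(1:ℝ)] (gam '' Set.Icc a m ∩ gam '' Set.Icc m b) = 0 :=
    measure_mono_null (arc_inter a m b h1 h2 h)
      (by rw [Set.insert_eq]
          exact measure_union_null (measure_singleton _) (measure_singleton _))
  have hunion : gam '' Set.Icc a m ∪ gam '' Set.Icc m b = gam '' Set.Icc a b := by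
    rw [← Set.image_union, Set.Icc_union_Icc_eq_Icc h1 h2]
  have := measure_union_add_inter (μ := μH[(1:ℝ)]) (gam '' Set.Icc a m) hB
  rw [hunion, hnull, add_zero] at this
  exact this

lemma arc_lower_aux {δ : ℝ} (hδ0 : 0 < δ) (hδ1 : δ ≤ 1) :
    ∀ n : ℕ, ∀ a b : ℝ, a ≤ b → b - a ≤ 2 * π → b - a ≤ 2 ^ n * δ →
    ENNReal.ofReal ((b - a) * (1 - δ ^ 2 / 16)) ≤ μH[(1:ℝ)] (gam '' Set.Icc a b) := by
  intro n
  induction n with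
  | zero => intro a b hab _ hlen; exact arc_lower_small hδ0 hδ1 a b hab (by simpa using hlen)
  | succ n ih =>
    intro a b hab h2π hlen
    set m := (a + b) / 2 with hm
    have h1 : a ≤ m := by rw [hm]; linarith
    have h2 : m ≤ b := by rw [hm]; linarith
    have hlen1 : m - a ≤ 2 ^ n * δ := by
      rw [hm]; rw [pow_succ] at hlen; nlinarith [pow_pos (by norm_num : (0:ℝ) < 2) n]
    have hlen2 : b - m ≤ 2 ^ n * δ := by
      rw [hm]; rw [pow_succ] at hlen; nlinarith [pow_pos (by norm_num : (0:ℝ) < 2) n]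
    have ha := ih a m h1 (by linarith) hlen1
    have hb := ih m b h2 (by linarith) hlen2
    rw [arc_split a m b h1 h2 h2π]
    calc ENNReal.ofReal ((b - a) * (1 - δ ^ 2 / 16))
        = ENNReal.ofReal ((m - a) * (1 - δ ^ 2 / 16))
          + ENNReal.ofReal ((b - m) * (1 - δ ^ 2 / 16)) := by
          rw [← ENNReal.ofReal_add (mul_nonneg (by linarith) (by nlinarith))
            (mul_nonneg (by linarith) (by nlinarith))]
          ring_nf
      _ ≤ _ := add_le_add ha hb

lemma arc_measure (a b : ℝ) (hab : a ≤ b) (h2π : b - a ≤ 2 * π) :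
    μH[(1:ℝ)] (gam '' Set.Icc a b) = ENNReal.ofReal (b - a) := by
  refine le_antisymm (arc_upper a b hab) ?_
  have key : ∀ δ : ℝ, 0 < δ → δ ≤ 1 →
      ENNReal.ofReal ((b - a) * (1 - δ ^ 2 / 16)) ≤ μH[(1:ℝ)] (gam '' Set.Icc a b) := by
    intro δ hδ0 hδ1
    obtain ⟨n, hn⟩ := pow_unbounded_of_one_lt ((b - a) / δ) (by norm_num : (1:ℝ) < 2)
    exact arc_lower_aux hδ0 hδ1 n a b hab h2π
      (by rw [div_lt_iff₀ hδ0] at hn; linarith)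
  have htend : Filter.Tendsto (fun δ : ℝ => ENNReal.ofReal ((b - a) * (1 - δ ^ 2 / 16)))
      (nhdsWithin 0 (Set.Ioi 0)) (nhds (ENNReal.ofReal (b - a))) := by
    have hc : Filter.Tendsto (fun δ : ℝ => (b - a) * (1 - δ ^ 2 / 16)) (nhds 0)
        (nhds (b - a)) := by
      have : Continuous fun δ : ℝ => (b - a) * (1 - δ ^ 2 / 16) := by continuity
      simpa using this.tendsto 0
    exact (ENNReal.continuous_ofReal.tendsto _).comp (hc.mono_left nhdsWithin_le_nhds)
  refine le_of_tendsto htend ?_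
  filter_upwards [Ioc_mem_nhdsGT_of_mem (Set.left_mem_Ico.2 one_pos)] with δ hδ
  exact key δ hδ.1 hδ.2

lemma gam_mem_sphere (t : ℝ) : gam t ∈ sphere (0 : EuclideanSpace ℝ (Fin 2)) 1 := by
  rw [mem_sphere_zero_iff_norm, EuclideanSpace.norm_eq]
  simp [Fin.sum_univ_two, Real.sin_sq_add_cos_sq]

lemma sphere_eq_arc :
    sphere (0 : EuclideanSpace ℝ (Fin 2)) 1 = gam '' Set.Icc (-π) π := by
  ext v
  constructor
  · intro hv
    rw [mem_sphere_zero_iff_norm, EuclideanSpace.norm_eq] at hv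
    have hsum : v 0 ^ 2 + v 1 ^ 2 = 1 := by
      have := hv
      rw [Fin.sum_univ_two] at this
      have h0 := Real.sq_sqrt (by positivity : (0:ℝ) ≤ ‖v 0‖ ^ 2 + ‖v 1‖ ^ 2)
      rw [this] at h0
      rw [Real.norm_eq_abs, Real.norm_eq_abs, sq_abs, sq_abs] at h0
      rw [← h0]; norm_num
    set z : ℂ := ⟨v 1, v 0⟩ with hz
    have hzabs : ‖z‖ = 1 := by
      rw [Complex.norm_def, Complex.normSq_mk]
      rw [show v 1 * v 1 + v 0 * v 0 = 1 by nlinarith]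
      exact Real.sqrt_one
    have hzne : z ≠ 0 := by
      intro h0
      rw [h0] at hzabs
      simp at hzabs
    refine ⟨Complex.arg z, ?_, ?_⟩
    · exact ⟨(Complex.neg_pi_lt_arg z).le, Complex.arg_le_pi z⟩
    · have hcos : Real.cos (Complex.arg z) = v 1 := by
        rw [Complex.cos_arg hzne, hzabs]; simp [hz]
      have hsin : Real.sin (Complex.arg z) = v 0 := by
        rw [Complex.sin_arg, hzabs]; simp [hz]
      ext i
      fin_cases i
      · exact hsin
      · exact hcos
  · rintro ⟨t, _, rfl⟩
    exact gam_mem_sphere t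

lemma tan_identity (ω θ : ℝ) (hθ : -(π/2) < θ) (hθ' : θ < π/2) :
    Real.sin ω * Real.tan θ + Real.cos ω = Real.cos (ω - θ) / Real.cos θ := by
  have hc : 0 < Real.cos θ := Real.cos_pos_of_mem_Ioo ⟨hθ, hθ'⟩
  rw [Real.tan_eq_sin_div_cos, Real.cos_sub]
  field_simp
  ring

lemma cos_nonpos_big {r : ℝ} (hr : 0 < r) {ω : ℝ} (hω : ω ∈ Set.Icc (-π) π)
    (h : π / 2 + Real.arctan r ≤ |ω|) {θ : ℝ}
    (hθ : θ ∈ Set.Icc (-(Real.arctan r)) (Real.arctan r)) :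
    Real.cos (ω - θ) ≤ 0 := by
  have hθmax : Real.arctan r < π / 2 := Real.arctan_lt_pi_div_two r
  have hθabs : |θ| ≤ Real.arctan r := abs_le.2 ⟨hθ.1, hθ.2⟩
  have hωabs : |ω| ≤ π := abs_le.2 ⟨hω.1, hω.2⟩
  rw [← Real.cos_abs]
  apply Real.cos_nonpos_of_pi_div_two_le_of_le
  · calc π / 2 = (π / 2 + Real.arctan r) - Real.arctan r := by ring
      _ ≤ |ω| - |θ| := sub_le_sub h hθabs
      _ ≤ |ω - θ| := abs_sub_abs_le_abs_sub ω θ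
  · calc |ω - θ| ≤ |ω| + |θ| := abs_sub ω θ
      _ ≤ π + π / 2 := by linarith

lemma part3_core {r : ℝ} (hr : 0 < r) {ω : ℝ} (hω : ω ∈ Set.Icc (-π) π) :
    (∀ x ∈ Set.Icc (-r) r, max (Real.sin ω * x + Real.cos ω) 0 = 0) ↔
      π / 2 + Real.arctan r ≤ |ω| := by
  have hθmax0 : 0 < Real.arctan r := by
    rw [← Real.arctan_zero]; exact Real.arctan_strictMono hr
  have hθmax : Real.arctan r < π / 2 := Real.arctan_lt_pi_div_two r
  constructor
  · intro hP
    by_contra hlt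
    push_neg at hlt
    set θ0 : ℝ := min (Real.arctan r) (max (-(Real.arctan r)) ω) with hθ0
    have hθ0mem : -(Real.arctan r) ≤ θ0 ∧ θ0 ≤ Real.arctan r :=
      ⟨le_min (by linarith) (le_max_left _ _), min_le_left _ _⟩
    have habs : |ω - θ0| < π / 2 := by
      rw [abs_lt] at hlt ⊢
      rcases le_total ω (-(Real.arctan r)) with h1 | h1
      · have : θ0 = -(Real.arctan r) := by
          rw [hθ0, max_eq_left h1, min_eq_right (by linarith)]
        rw [this]; constructor <;> linarith
      · rcases le_total (Real.arctan r) ω with h2 | h2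
        · have : θ0 = Real.arctan r := by
            rw [hθ0, max_eq_right (by linarith), min_eq_left h2]
          rw [this]; constructor <;> linarith
        · have : θ0 = ω := by
            rw [hθ0, max_eq_right h1, min_eq_right h2]
          rw [this]; constructor <;> linarith
    have hcos : 0 < Real.cos (ω - θ0) :=
      Real.cos_pos_of_mem_Ioo (abs_lt.1 habs |> fun h => ⟨h.1, h.2⟩)
    have hmono := Real.strictMonoOn_tan.monotoneOn
    have hθ0Ioo : θ0 ∈ Set.Ioo (-(π/2)) (π/2) :=
      ⟨by linarith [hθ0mem.1], by linarith [hθ0mem.2]⟩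
    have hθmIoo : Real.arctan r ∈ Set.Ioo (-(π/2)) (π/2) := ⟨by linarith, hθmax⟩
    have hθmIoo' : -(Real.arctan r) ∈ Set.Ioo (-(π/2)) (π/2) := ⟨by linarith, by linarith⟩
    have hx2 : Real.tan θ0 ≤ r := by
      have := hmono hθ0Ioo hθmIoo hθ0mem.2
      rwa [Real.tan_arctan] at this
    have hx1 : -r ≤ Real.tan θ0 := by
      have := hmono hθmIoo' hθ0Ioo hθ0mem.1
      rwa [Real.tan_neg, Real.tan_arctan] at this
    have hP' := hP (Real.tan θ0) ⟨hx1, hx2⟩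
    have hle : Real.sin ω * Real.tan θ0 + Real.cos ω ≤ 0 := max_eq_right_iff.1 hP'
    have hid := tan_identity ω θ0 hθ0Ioo.1 hθ0Ioo.2
    have hcθ : 0 < Real.cos θ0 := Real.cos_pos_of_mem_Ioo hθ0Ioo
    rw [hid] at hle
    have := div_pos hcos hcθ
    linarith
  · intro h x hx
    set θ : ℝ := Real.arctan x with hθ
    have hθmem : θ ∈ Set.Icc (-(Real.arctan r)) (Real.arctan r) := by
      constructor
      · rw [hθ, ← Real.arctan_neg]
        exact Real.arctan_strictMono.monotone (by linarith [hx.1])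
      · exact Real.arctan_strictMono.monotone hx.2
    have hcos := cos_nonpos_big hr hω h hθmem
    have hc : 0 < Real.cos θ := Real.cos_arctan x ▸ by positivity
    have hid := tan_identity ω θ (Real.neg_pi_div_two_lt_arctan x) (Real.arctan_lt_pi_div_two x)
    rw [Real.tan_arctan] at hid
    rw [max_eq_right]
    rw [hid]
    exact div_nonpos_of_nonpos_of_nonneg hcos hc.le

theorem angle_characterization_of_dead_neuron (r : ℝ) (hr : 0 < r) :
    letI θmax : ℝ := Real.arctan r
    (∀ ω : ℝ, ω ∈ Set.Icc (-π) π → π / 2 + θmax < |ω| →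
        ∀ θ ∈ Set.Icc (-θmax) θmax, Real.cos (ω - θ) ≤ 0) ∧
    (∀ ω : ℝ, ω ∈ Set.Icc (-π) π → |ω| < π / 2 - θmax →
        ∀ θ ∈ Set.Icc (-θmax) θmax, 0 < Real.cos (ω - θ)) ∧
    (∀ ω : ℝ, ω ∈ Set.Icc (-π) π →
        ((∀ x ∈ Set.Icc (-r) r, max (Real.sin ω * x + Real.cos ω) 0 = 0) ↔
          π / 2 + θmax ≤ |ω|)) ∧
    μH[(1 : ℝ)] {v : EuclideanSpace ℝ (Fin 2) |
          v ∈ sphere (0 : EuclideanSpace ℝ (Fin 2)) 1 ∧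
          ∀ x ∈ Set.Icc (-r) r, max (v 0 * x + v 1) 0 = 0}
        / μH[(1 : ℝ)] (sphere (0 : EuclideanSpace ℝ (Fin 2)) 1)
      = ENNReal.ofReal (Real.arctan (1 / r) / π) := by
  have hθmax0 : 0 < Real.arctan r := by
    rw [← Real.arctan_zero]; exact Real.arctan_strictMono hr
  have hθmax : Real.arctan r < π / 2 := Real.arctan_lt_pi_div_two r
  have hπ : 0 < π := Real.pi_pos
  refine ⟨?_, ?_, ?_, ?_⟩
  · intro ω hω h θ hθ
    exact cos_nonpos_big hr hω h.le hθ
  · intro ω hω h θ hθ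
    apply Real.cos_pos_of_mem_Ioo
    have h1 : |θ| ≤ Real.arctan r := abs_le.2 ⟨hθ.1, hθ.2⟩
    have : |ω - θ| < π / 2 := by
      calc |ω - θ| ≤ |ω| + |θ| := abs_sub ω θ
        _ < π / 2 := by linarith
    exact ⟨(abs_lt.1 this).1, (abs_lt.1 this).2⟩
  · intro ω hω
    exact part3_core hr hω
  · set c : ℝ := π / 2 + Real.arctan r with hc
    have hcπ : c ≤ π := by rw [hc]; linarith
    have hc0 : 0 < c := by rw [hc]; linarith
    have hSeq : {v : EuclideanSpace ℝ (Fin 2) |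
          v ∈ sphere (0 : EuclideanSpace ℝ (Fin 2)) 1 ∧
          ∀ x ∈ Set.Icc (-r) r, max (v 0 * x + v 1) 0 = 0}
        = gam '' Set.Icc (-π) (-c) ∪ gam '' Set.Icc c π := by
      ext v
      constructor
      · rintro ⟨hv, hP⟩
        rw [sphere_eq_arc] at hv
        obtain ⟨ω, hωmem, rfl⟩ := hv
        have hP' : ∀ x ∈ Set.Icc (-r) r, max (Real.sin ω * x + Real.cos ω) 0 = 0 := by
          simpa using hP
        have habs := (part3_core hr hωmem).1 hP'
        rcases le_or_gt 0 ω with h0 | h0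
        · right
          refine ⟨ω, ⟨?_, hωmem.2⟩, rfl⟩
          rwa [abs_of_nonneg h0] at habs
        · left
          refine ⟨ω, ⟨hωmem.1, ?_⟩, rfl⟩
          rw [abs_of_neg h0] at habs
          show ω ≤ -(π / 2 + Real.arctan r)
          linarith
      · rintro (⟨ω, hωmem, rfl⟩ | ⟨ω, hωmem, rfl⟩)
        · have hωIcc : ω ∈ Set.Icc (-π) π := ⟨hωmem.1, by linarith [hωmem.2]⟩
          refine ⟨gam_mem_sphere ω, ?_⟩
          have habs : c ≤ |ω| := by
            rw [abs_of_nonpos (by linarith [hωmem.2])]; linarith [hωmem.2]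
          simpa using (part3_core hr hωIcc).2 habs
        · have hωIcc : ω ∈ Set.Icc (-π) π := ⟨by linarith [hωmem.1], hωmem.2⟩
          refine ⟨gam_mem_sphere ω, ?_⟩
          have habs : c ≤ |ω| := by
            rw [abs_of_nonneg (by linarith [hωmem.1])]; exact hωmem.1
          simpa using (part3_core hr hωIcc).2 habs
    have hinter : gam '' Set.Icc (-π) (-c) ∩ gam '' Set.Icc c π ⊆ {gam π} := by
      rintro v ⟨⟨s, hs, rfl⟩, ⟨t, ht, hv⟩⟩
      obtain ⟨k, hk⟩ := gam_eq t s hv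
      have h1 : 0 < t - s := by linarith [hs.2, ht.1]
      have h2 : t - s ≤ 2 * π := by linarith [hs.1, ht.2]
      have hk1 : k = 1 := by
        have hk0 : (0:ℤ) < k := by
          by_contra hneg
          push_neg at hneg
          have : (k : ℝ) ≤ 0 := by exact_mod_cast hneg
          nlinarith
        have hk2 : k ≤ 1 := by
          by_contra hgt
          push_neg at hgt
          have : (2 : ℝ) ≤ (k : ℝ) := by exact_mod_cast hgt
          nlinarith
        omega
      rw [hk1] at hk
      simp at hk
      have hts : t = π := by nlinarith [hs.1, ht.2]
      rw [← hv, hts]; rfl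
    haveI : NullSingletonClass (μH[(1:ℝ)] : Measure (EuclideanSpace ℝ (Fin 2))) :=
      MeasureTheory.Measure.noAtoms_hausdorff _ one_pos
    have hnull : μH[(1:ℝ)] (gam '' Set.Icc (-π) (-c) ∩ gam '' Set.Icc c π) = 0 :=
      measure_mono_null hinter (measure_singleton _)
    have hB : MeasurableSet (gam '' Set.Icc c π) :=
      (isCompact_Icc.image gam_continuous).measurableSet
    have hadd := measure_union_add_inter (μ := μH[(1:ℝ)]) (gam '' Set.Icc (-π) (-c)) hB
    rw [hnull, add_zero] at hadd
    have hμ1 : μH[(1:ℝ)] (gam '' Set.Icc (-π) (-c)) = ENNReal.ofReal (π - c) := by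
      rw [arc_measure (-π) (-c) (by linarith) (by linarith)]
      ring_nf
    have hμ2 : μH[(1:ℝ)] (gam '' Set.Icc c π) = ENNReal.ofReal (π - c) :=
      arc_measure c π hcπ (by linarith)
    have hnum : μH[(1:ℝ)] {v : EuclideanSpace ℝ (Fin 2) |
          v ∈ sphere (0 : EuclideanSpace ℝ (Fin 2)) 1 ∧
          ∀ x ∈ Set.Icc (-r) r, max (v 0 * x + v 1) 0 = 0}
        = ENNReal.ofReal (2 * (π - c)) := by
      rw [hSeq, hadd, hμ1, hμ2, ← ENNReal.ofReal_add (by linarith) (by linarith)]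
      ring_nf
    have hden : μH[(1:ℝ)] (sphere (0 : EuclideanSpace ℝ (Fin 2)) 1)
        = ENNReal.ofReal (2 * π) := by
      rw [sphere_eq_arc, arc_measure (-π) π (by linarith) (by linarith)]
      ring_nf
    rw [hnum, hden, ← ENNReal.ofReal_div_of_pos (by linarith)]
    congr 1
    rw [one_div, Real.arctan_inv_of_pos hr]
    field_simp
    ring
end
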